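/- Let A be an infinite set and n ≥ 2. No cyclic operation f : Aⁿ → A preserves the inequality relation ≠. That is, if f satisfies f(x₁, ..., xₙ) = f(x₂, ..., xₙ, x₁) for all inputs, then there exist tuples (a₁,...,aₙ) and (b₁,...,bₙ) with aᵢ ≠ bᵢ for all i but f(a₁,...,aₙ) = f(b₁,...,bₙ). -/
import Mathlib

/-- On an infinite set, no cyclic operation of arity `n ≥ 2` preserves `≠`. -/
theorem stmt_2 {A : Type*} [Infinite A] (n : ℕ) (hn : 2 ≤ n)
    (f : (Fin n → A) → A)
    (hcyc : ∀ x : Fin n → A, f x = f (fun i => x (finRotate n i))) :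
    ∃ a b : Fin n → A, (∀ i, a i ≠ b i) ∧ f a = f b := by
  obtain ⟨m, rfl⟩ : ∃ m, n = m + 1 := ⟨n - 1, by omega⟩
  set g : Fin (m + 1) → A := fun i => Infinite.natEmbedding A i.val with hg
  have hginj : Function.Injective g := fun i j h => by
    have := (Infinite.natEmbedding A).injective h
    exact Fin.ext this
  refine ⟨g, fun i => g (finRotate (m + 1) i), ?_, hcyc g⟩
  intro i h
  have hrot : finRotate (m + 1) i = i + 1 := finRotate_succ_apply i
  have : i = i + 1 := by rw [← hrot]; exact hginj h
  have h1 : (1 : Fin (m + 1)) = 0 := by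
    have := congrArg (· - i) this
    simpa [add_sub_cancel_left] using this.symm
  have h2 := congrArg Fin.val h1
  rw [Fin.val_one', Nat.mod_eq_of_lt (by omega : 1 < m + 1)] at h2
  simp at h2
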